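/- There exists, for each odd N ≥ 5, a distribution on graphs with vertex set {1,...,N} such that every edge appears with probability 1/2, every pair of distinct potential edges appears with probability 1/4 (i.e. the edge indicators are pairwise independent), the graph is disconnected with probability 1 − 2^{1−N}, and the graph contains no perfect matching with probability 1. -/

import Mathlib

open MeasureTheory
open scoped ENNReal

open Finset

namespace PIDG

variable {N : ℕ}

def cnt (f : Fin N → Bool) : ℕ := (Finset.univ.filter (fun i => f i = true)).card

lemma cnt_update (f : Fin N → Bool) (u : Fin N) :
    Odd (cnt (Function.update f u (!f u))) ↔ ¬ Odd (cnt f) := by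
  have hcnt : ∀ g : Fin N → Bool, cnt g = ∑ x, if g x = true then 1 else 0 := fun g =>
    Finset.card_filter _ _
  have hfun : (fun x => if Function.update f u (!f u) x = true then 1 else 0)
      = Function.update (fun x => if f x = true then 1 else 0) u (if (!f u) = true then 1 else 0) := by
    funext x
    by_cases hx : x = u
    · subst hx; simp
    · simp [Function.update_of_ne hx]
  have h1 : cnt (Function.update f u (!f u))
      = (if (!f u) = true then 1 else 0) + ∑ x ∈ Finset.univ.erase u, (if f x = true then 1 else 0) := by
    rw [hcnt, hfun, Finset.sum_update_of_mem (Finset.mem_univ u)]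
    rw [Finset.sdiff_singleton_eq_erase]
  have h2 : cnt f = (if f u = true then 1 else 0) + ∑ x ∈ Finset.univ.erase u, (if f x = true then 1 else 0) := by
    rw [hcnt, ← Finset.add_sum_erase _ _ (Finset.mem_univ u)]
  cases hfu : f u <;>
    · rw [hfu] at h1 h2
      simp at h1 h2 ⊢
      rw [h1, h2]
      rw [Nat.odd_iff, Nat.even_iff]
      omega

lemma card_agree (T : Finset (Fin N)) (a : Fin N → Bool) :
    (univ.filter fun f : Fin N → Bool => ∀ i ∈ T, f i = a i).card = 2 ^ (N - T.card) := by
  have : (univ.filter fun f : Fin N → Bool => ∀ i ∈ T, f i = a i).card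
      = (univ : Finset ((Tᶜ : Finset (Fin N)) → Bool)).card := by
    apply Finset.card_nbij' (fun f => fun x => f x.1)
      (fun g => fun x => if h : x ∈ T then a x else g ⟨x, Finset.mem_compl.2 h⟩)
    · intro f hf; exact Finset.mem_univ _
    · intro g hg
      simp only [Finset.mem_coe, Finset.mem_filter, Finset.mem_univ, true_and]
      intro i hi; simp [hi]
    · intro f hf
      funext x
      by_cases h : x ∈ T
      · simp [h, ((Finset.mem_filter.1 hf).2 x h)]
      · simp [h]
    · intro g hg
      funext x
      have hx : (x : Fin N) ∉ T := Finset.mem_compl.1 x.2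
      simp [hx]
  rw [this, Finset.card_univ, Fintype.card_fun]
  simp [Finset.card_compl]


lemma countT (T : Finset (Fin N)) (hT : T.card < N) (a : Fin N → Bool) :
    (univ.filter fun f : Fin N → Bool => (∀ i ∈ T, f i = a i) ∧ Odd (cnt f)).card
      = 2 ^ (N - T.card - 1) := by
  obtain ⟨u, hu⟩ : ∃ u, u ∉ T := by
    by_contra h
    push_neg at h
    have : (univ : Finset (Fin N)) ⊆ T := fun x _ => h x
    have := Finset.card_le_card this
    simp [Finset.card_univ] at this
    omega
  have flipmem : ∀ f : Fin N → Bool, (∀ i ∈ T, f i = a i) →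
      ∀ i ∈ T, Function.update f u (!f u) i = a i := by
    intro f hf i hi
    rw [Function.update_of_ne (fun h => hu (by rw [← h]; exact hi))]
    exact hf i hi
  have key : (univ.filter fun f : Fin N → Bool => (∀ i ∈ T, f i = a i) ∧ Odd (cnt f)).card
      = (univ.filter fun f : Fin N → Bool => (∀ i ∈ T, f i = a i) ∧ ¬ Odd (cnt f)).card := by
    apply Finset.card_nbij' (fun f => Function.update f u (!f u))
      (fun f => Function.update f u (!f u))
    · intro f hf
      rw [Finset.mem_coe, Finset.mem_filter] at hf ⊢
      refine ⟨Finset.mem_univ _, flipmem f hf.2.1, ?_⟩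
      rw [cnt_update]
      simp [hf.2.2]
    · intro f hf
      rw [Finset.mem_coe, Finset.mem_filter] at hf ⊢
      refine ⟨Finset.mem_univ _, flipmem f hf.2.1, ?_⟩
      rw [cnt_update]
      simp [hf.2.2]
    · intro f _
      simp [Function.update_idem, Function.update_self, Bool.not_not, Function.update_eq_self]
    · intro f _
      simp [Function.update_idem, Function.update_self, Bool.not_not, Function.update_eq_self]
  have hsplit2 : (univ.filter fun f : Fin N → Bool => (∀ i ∈ T, f i = a i) ∧ Odd (cnt f)).card
      + (univ.filter fun f : Fin N → Bool => (∀ i ∈ T, f i = a i) ∧ ¬ Odd (cnt f)).card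
      = 2 ^ (N - T.card) := by
    have hsplit := Finset.card_filter_add_card_filter_not
      (s := univ.filter fun f : Fin N → Bool => ∀ i ∈ T, f i = a i)
      (fun f => Odd (cnt f))
    rw [Finset.filter_filter, Finset.filter_filter, card_agree] at hsplit
    exact hsplit
  have hpow : (2:ℕ) ^ (N - T.card) = 2 * 2 ^ (N - T.card - 1) := by
    have h : N - T.card = (N - T.card - 1) + 1 := (Nat.succ_pred_eq_of_pos (Nat.sub_pos_of_lt hT)).symm
    conv_lhs => rw [h, pow_succ']
  rw [key, ← two_mul, hpow] at hsplit2
  rw [key]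
  exact Nat.eq_of_mul_eq_mul_left (by norm_num) hsplit2


lemma two_pow_sub_one_add (a : ℕ) (h : 1 ≤ a) : (2:ℕ)^(a-1) + 2^(a-1) = 2^a := by
  conv_rhs => rw [← Nat.succ_pred_eq_of_pos h]
  rw [pow_succ, mul_two, Nat.pred_eq_sub_one]

lemma count_same2 (hN : 3 ≤ N) (i j : Fin N) (hij : i ≠ j) :
    (univ.filter fun f : Fin N → Bool => f i = f j ∧ Odd (cnt f)).card = 2 ^ (N - 2) := by
  have hc : ({i, j} : Finset (Fin N)).card = 2 := by
    rw [Finset.card_insert_of_notMem (by simpa using hij), Finset.card_singleton]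
  have hlt : ({i, j} : Finset (Fin N)).card < N := by
    rw [hc]; exact lt_of_lt_of_le (by norm_num) hN
  have h1 := countT {i, j} hlt (fun _ => true)
  have h2 := countT {i, j} hlt (fun _ => false)
  rw [hc] at h1 h2
  have e : (univ.filter fun f : Fin N → Bool => f i = f j ∧ Odd (cnt f))
      = (univ.filter fun f : Fin N → Bool =>
          (∀ x ∈ ({i, j} : Finset (Fin N)), f x = true) ∧ Odd (cnt f))
        ∪ (univ.filter fun f : Fin N → Bool =>
          (∀ x ∈ ({i, j} : Finset (Fin N)), f x = false) ∧ Odd (cnt f)) := by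
    ext f
    simp only [Finset.mem_filter, Finset.mem_union, Finset.mem_univ, true_and,
      Finset.mem_insert, Finset.mem_singleton, forall_eq_or_imp, forall_eq]
    constructor
    · rintro ⟨hfe, ho⟩
      cases hfi : f i <;> cases hfj : f j <;> simp_all
    · rintro (⟨⟨ha, hb⟩, ho⟩ | ⟨⟨ha, hb⟩, ho⟩) <;> simp [ha, hb, ho]
  have hdisj : Disjoint
      (univ.filter fun f : Fin N → Bool =>
          (∀ x ∈ ({i, j} : Finset (Fin N)), f x = true) ∧ Odd (cnt f))
      (univ.filter fun f : Fin N → Bool =>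
          (∀ x ∈ ({i, j} : Finset (Fin N)), f x = false) ∧ Odd (cnt f)) := by
    rw [Finset.disjoint_left]
    intro f hf1 hf2
    simp only [Finset.mem_filter, Finset.mem_insert, Finset.mem_singleton,
      forall_eq_or_imp, forall_eq] at hf1 hf2
    simp_all
  rw [e, Finset.card_union_of_disjoint hdisj, h1, h2]
  exact two_pow_sub_one_add (N - 2) (Nat.le_sub_of_add_le (le_trans (by norm_num) hN))

lemma count_same3 (hN : 4 ≤ N) (i j k : Fin N) (hij : i ≠ j) (hik : i ≠ k) (hjk : j ≠ k) :
    (univ.filter fun f : Fin N → Bool => f i = f j ∧ f i = f k ∧ Odd (cnt f)).card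
      = 2 ^ (N - 3) := by
  have hc : ({i, j, k} : Finset (Fin N)).card = 3 := by
    rw [Finset.card_insert_of_notMem (by simp [hij, hik]),
      Finset.card_insert_of_notMem (by simpa using hjk), Finset.card_singleton]
  have hlt : ({i, j, k} : Finset (Fin N)).card < N := by
    rw [hc]; exact lt_of_lt_of_le (by norm_num) hN
  have h1 := countT {i, j, k} hlt (fun _ => true)
  have h2 := countT {i, j, k} hlt (fun _ => false)
  rw [hc] at h1 h2
  have e : (univ.filter fun f : Fin N → Bool => f i = f j ∧ f i = f k ∧ Odd (cnt f))
      = (univ.filter fun f : Fin N → Bool =>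
          (∀ x ∈ ({i, j, k} : Finset (Fin N)), f x = true) ∧ Odd (cnt f))
        ∪ (univ.filter fun f : Fin N → Bool =>
          (∀ x ∈ ({i, j, k} : Finset (Fin N)), f x = false) ∧ Odd (cnt f)) := by
    ext f
    simp only [Finset.mem_filter, Finset.mem_union, Finset.mem_univ, true_and,
      Finset.mem_insert, Finset.mem_singleton, forall_eq_or_imp, forall_eq]
    constructor
    · rintro ⟨h1, h2, ho⟩
      cases hfi : f i <;> cases hfj : f j <;> cases hfk : f k <;> simp_all
    · rintro (⟨⟨ha, hb, hcc⟩, ho⟩ | ⟨⟨ha, hb, hcc⟩, ho⟩) <;> simp [ha, hb, hcc, ho]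
  have hdisj : Disjoint
      (univ.filter fun f : Fin N → Bool =>
          (∀ x ∈ ({i, j, k} : Finset (Fin N)), f x = true) ∧ Odd (cnt f))
      (univ.filter fun f : Fin N → Bool =>
          (∀ x ∈ ({i, j, k} : Finset (Fin N)), f x = false) ∧ Odd (cnt f)) := by
    rw [Finset.disjoint_left]
    intro f hf1 hf2
    simp only [Finset.mem_filter, Finset.mem_insert, Finset.mem_singleton,
      forall_eq_or_imp, forall_eq] at hf1 hf2
    simp_all
  rw [e, Finset.card_union_of_disjoint hdisj, h1, h2]
  exact two_pow_sub_one_add (N - 3) (Nat.le_sub_of_add_le (le_trans (by norm_num) hN))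


set_option maxHeartbeats 1000000 in
lemma count_same22 (hN : 5 ≤ N) (i j k l : Fin N) (hij : i ≠ j) (hkl : k ≠ l)
    (hik : i ≠ k) (hil : i ≠ l) (hjk : j ≠ k) (hjl : j ≠ l) :
    (univ.filter fun f : Fin N → Bool => f i = f j ∧ f k = f l ∧ Odd (cnt f)).card
      = 2 ^ (N - 3) := by
  have hc : ({i, j, k, l} : Finset (Fin N)).card = 4 := by
    rw [Finset.card_insert_of_notMem (by simp [hij, hik, hil]),
      Finset.card_insert_of_notMem (by simp [hjk, hjl]),
      Finset.card_insert_of_notMem (by simpa using hkl), Finset.card_singleton]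
  have hlt : ({i, j, k, l} : Finset (Fin N)).card < N := by
    rw [hc]; exact lt_of_lt_of_le (by norm_num) hN
  have hmem : ∀ (b c : Bool) (f : Fin N → Bool),
      (∀ x ∈ ({i, j, k, l} : Finset (Fin N)),
          f x = (fun x => if x = i ∨ x = j then b else c) x)
        ↔ (f i = b ∧ f j = b ∧ f k = c ∧ f l = c) := by
    intro b c f
    simp only [Finset.mem_insert, Finset.mem_singleton, forall_eq_or_imp, forall_eq]
    simp [hik.symm, hil.symm, hjk.symm, hjl.symm]
  have h4 := fun b c => countT {i, j, k, l} hlt (fun x => if x = i ∨ x = j then b else c)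
  rw [hc] at h4
  have ecard : ∀ b c : Bool,
      (univ.filter fun f : Fin N → Bool => (f i = b ∧ f j = b ∧ f k = c ∧ f l = c)
        ∧ Odd (cnt f)).card = 2 ^ (N - 4 - 1) := by
    intro b c
    rw [← h4 b c]
    congr 1
    apply Finset.filter_congr
    intro f _
    rw [hmem]
  have e : (univ.filter fun f : Fin N → Bool => f i = f j ∧ f k = f l ∧ Odd (cnt f))
      = ((univ.filter fun f : Fin N → Bool =>
            (f i = true ∧ f j = true ∧ f k = true ∧ f l = true) ∧ Odd (cnt f))
        ∪ (univ.filter fun f : Fin N → Bool =>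
            (f i = true ∧ f j = true ∧ f k = false ∧ f l = false) ∧ Odd (cnt f)))
        ∪ ((univ.filter fun f : Fin N → Bool =>
            (f i = false ∧ f j = false ∧ f k = true ∧ f l = true) ∧ Odd (cnt f))
        ∪ (univ.filter fun f : Fin N → Bool =>
            (f i = false ∧ f j = false ∧ f k = false ∧ f l = false) ∧ Odd (cnt f))) := by
    have hiff : ∀ f : Fin N → Bool, (f i = f j ∧ f k = f l) ↔
        ((f i = true ∧ f j = true ∧ f k = true ∧ f l = true)
          ∨ (f i = true ∧ f j = true ∧ f k = false ∧ f l = false))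
        ∨ ((f i = false ∧ f j = false ∧ f k = true ∧ f l = true)
          ∨ (f i = false ∧ f j = false ∧ f k = false ∧ f l = false)) := by
      intro f
      cases hfi : f i <;> cases hfj : f j <;> cases hfk : f k <;> cases hfl : f l <;> simp
    ext f
    simp only [Finset.mem_filter, Finset.mem_union, Finset.mem_univ, true_and]
    constructor
    · rintro ⟨h1, h2, ho⟩
      rcases (hiff f).1 ⟨h1, h2⟩ with (h | h) | (h | h)
      · exact Or.inl (Or.inl ⟨h, ho⟩)
      · exact Or.inl (Or.inr ⟨h, ho⟩)
      · exact Or.inr (Or.inl ⟨h, ho⟩)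
      · exact Or.inr (Or.inr ⟨h, ho⟩)
    · rintro ((⟨h, ho⟩ | ⟨h, ho⟩) | (⟨h, ho⟩ | ⟨h, ho⟩)) <;>
        exact ⟨h.1.trans h.2.1.symm, h.2.2.1.trans h.2.2.2.symm, ho⟩
  have hd1 : Disjoint
      (univ.filter fun f : Fin N → Bool =>
          (f i = true ∧ f j = true ∧ f k = true ∧ f l = true) ∧ Odd (cnt f))
      (univ.filter fun f : Fin N → Bool =>
          (f i = true ∧ f j = true ∧ f k = false ∧ f l = false) ∧ Odd (cnt f)) := by
    rw [Finset.disjoint_left]; intro f hf1 hf2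
    simp only [Finset.mem_filter] at hf1 hf2; simp_all
  have hd2 : Disjoint
      (univ.filter fun f : Fin N → Bool =>
          (f i = false ∧ f j = false ∧ f k = true ∧ f l = true) ∧ Odd (cnt f))
      (univ.filter fun f : Fin N → Bool =>
          (f i = false ∧ f j = false ∧ f k = false ∧ f l = false) ∧ Odd (cnt f)) := by
    rw [Finset.disjoint_left]; intro f hf1 hf2
    simp only [Finset.mem_filter] at hf1 hf2; simp_all
  have hd3 : Disjoint
      ((univ.filter fun f : Fin N → Bool =>
            (f i = true ∧ f j = true ∧ f k = true ∧ f l = true) ∧ Odd (cnt f))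
        ∪ (univ.filter fun f : Fin N → Bool =>
            (f i = true ∧ f j = true ∧ f k = false ∧ f l = false) ∧ Odd (cnt f)))
      ((univ.filter fun f : Fin N → Bool =>
            (f i = false ∧ f j = false ∧ f k = true ∧ f l = true) ∧ Odd (cnt f))
        ∪ (univ.filter fun f : Fin N → Bool =>
            (f i = false ∧ f j = false ∧ f k = false ∧ f l = false) ∧ Odd (cnt f))) := by
    rw [Finset.disjoint_left]; intro f hf1 hf2
    simp only [Finset.mem_union, Finset.mem_filter] at hf1 hf2
    rcases hf1 with hf1 | hf1 <;> rcases hf2 with hf2 | hf2 <;> simp_all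
  rw [e, Finset.card_union_of_disjoint hd3, Finset.card_union_of_disjoint hd1,
    Finset.card_union_of_disjoint hd2, ecard, ecard, ecard, ecard]
  have s1 : (2:ℕ) ^ (N - 4 - 1) + 2 ^ (N - 4 - 1) = 2 ^ (N - 4) :=
    two_pow_sub_one_add (N - 4) (Nat.le_sub_of_add_le (le_trans (by norm_num) hN))
  rw [s1]
  have s2 : N - 4 = N - 3 - 1 := by omega
  rw [s2]
  exact two_pow_sub_one_add (N - 3) (Nat.le_sub_of_add_le (le_trans (by norm_num) hN))


lemma epow (a b : ℕ) (hab : a ≤ b) : (2:ℝ≥0∞)^a * (2^b)⁻¹ = (2^(b-a))⁻¹ := by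
  have h : (2:ℝ≥0∞)^b = 2^a * 2^(b-a) := by rw [← pow_add]; congr 1; omega
  rw [h, ENNReal.mul_inv (Or.inl (pow_ne_zero _ two_ne_zero))
      (Or.inl (ENNReal.pow_ne_top ENNReal.ofNat_ne_top)), ← mul_assoc,
    ENNReal.mul_inv_cancel (pow_ne_zero _ two_ne_zero) (ENNReal.pow_ne_top ENNReal.ofNat_ne_top),
    one_mul]

lemma conn_iff {N : ℕ} (hN : 0 < N) (f : Fin N → Bool) :
    (SimpleGraph.fromRel fun a b => f a = f b).Connected ↔ ∀ x y, f x = f y := by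
  constructor
  · intro hc x y
    obtain ⟨w⟩ := hc.preconnected x y
    induction w with
    | nil => rfl
    | @cons a b c h p ih =>
      exact (((SimpleGraph.fromRel_adj _ a b).1 h).2.elim id Eq.symm).trans ih
  · intro hconst
    rw [SimpleGraph.connected_iff]
    refine ⟨fun x y => ?_, ⟨⟨0, hN⟩⟩⟩
    by_cases hxy : x = y
    · subst hxy; exact SimpleGraph.Reachable.refl x
    · exact SimpleGraph.Adj.reachable
        ((SimpleGraph.fromRel_adj _ x y).2 ⟨hxy, Or.inl (hconst x y)⟩)

lemma count_conn {N : ℕ} (hN : 5 ≤ N) (hodd : Odd N) :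
    (univ.filter fun f : Fin N → Bool => (∀ x y, f x = f y) ∧ Odd (cnt f))
      = {fun _ => true} := by
  ext f
  simp only [Finset.mem_filter, Finset.mem_univ, true_and, Finset.mem_singleton]
  constructor
  · rintro ⟨hc, ho⟩
    cases hx : f ⟨0, lt_of_lt_of_le (by norm_num) hN⟩
    · exfalso
      have hall : ∀ y, f y = false := fun y => (hc y _).trans hx
      have hz : cnt f = 0 := by simp [cnt, hall]
      rw [hz] at ho
      simp at ho
    · funext y
      exact (hc y _).trans hx
  · rintro rfl
    refine ⟨fun _ _ => rfl, ?_⟩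
    have hcn : cnt (fun _ : Fin N => true) = N := by simp [cnt]
    rw [hcn]
    exact hodd

end PIDG


/-- There is a distribution on graphs on `{1,...,N}` (for odd `N ≥ 5`) whose edge indicators
are pairwise independent with edge probability `1/2`, yet the graph is disconnected with
probability `1 - 2^{1-N}` and contains no perfect matching with probability `1`. -/
theorem pairwise_indep_disconnected_graphs
    (N : ℕ) (hN : 5 ≤ N) (hodd : Odd N) :
    ∃ (Ω : Type) (_ : MeasurableSpace Ω) (P : Measure Ω) (_ : IsProbabilityMeasure P)
      (G : Ω → SimpleGraph (Fin N)),
      (∀ e : Sym2 (Fin N), ¬e.IsDiag → P {ω | e ∈ (G ω).edgeSet} = 1 / 2) ∧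
      (∀ e e' : Sym2 (Fin N), ¬e.IsDiag → ¬e'.IsDiag → e ≠ e' →
        P {ω | e ∈ (G ω).edgeSet ∧ e' ∈ (G ω).edgeSet} = 1 / 4) ∧
      P {ω | ¬(G ω).Connected} = 1 - (1 / 2) ^ (N - 1) ∧
      P {ω | ¬∃ M : (G ω).Subgraph, M.IsPerfectMatching} = 1 := by
  classical
  -- clean arithmetic facts (omega must run before "dirty" hypotheses appear)
  have h3N : 3 ≤ N := by omega
  have h4N : 4 ≤ N := by omega
  have h0N : 0 < N := by omega
  have hle2 : N - 2 ≤ N - 1 := by omega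
  have hle3 : N - 3 ≤ N - 1 := by omega
  have h21 : N - 1 - (N - 2) = 1 := by omega
  have h31 : N - 1 - (N - 3) = 2 := by omega
  set P : Measure (Fin N → Bool) :=
    (2 ^ (N - 1) : ℝ≥0∞)⁻¹ • Measure.count.restrict {f | Odd (PIDG.cnt f)} with hP
  have Papp : ∀ (p : (Fin N → Bool) → Prop) [DecidablePred p],
      P {f | p f} = ((Finset.univ.filter fun f => p f ∧ Odd (PIDG.cnt f)).card : ℝ≥0∞)
        * (2 ^ (N - 1))⁻¹ := by
    intro p _
    rw [hP, Measure.smul_apply, Measure.restrict_apply MeasurableSet.of_discrete]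
    have hset : {f | p f} ∩ {f | Odd (PIDG.cnt f)}
        = ↑(Finset.univ.filter fun f : Fin N → Bool => p f ∧ Odd (PIDG.cnt f)) := by
      ext f
      simp [Set.mem_setOf_eq]
    rw [hset, Measure.count_apply_finset, smul_eq_mul, mul_comm]
  have hcast : ∀ a : ℕ, ((2 ^ a : ℕ) : ℝ≥0∞) = 2 ^ a := by
    intro a; push_cast; ring
  have htot : P Set.univ = 1 := by
    have h0 := PIDG.countT (∅ : Finset (Fin N)) (by simpa using h0N) (fun _ => true)
    have he : (Finset.univ.filter fun f : Fin N → Bool => (fun _ => True) f ∧ Odd (PIDG.cnt f))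
        = Finset.univ.filter fun f : Fin N → Bool =>
            (∀ i ∈ (∅ : Finset (Fin N)), f i = true) ∧ Odd (PIDG.cnt f) := by
      apply Finset.filter_congr
      intro f _
      simp
    have : (Set.univ : Set (Fin N → Bool)) = {f | (fun _ => True) f} := by
      ext f; simp
    rw [this, Papp, he, h0]
    simp only [Finset.card_empty, Nat.sub_zero]
    rw [hcast]
    exact ENNReal.mul_inv_cancel (pow_ne_zero _ two_ne_zero)
      (ENNReal.pow_ne_top ENNReal.ofNat_ne_top)
  haveI hprob : IsProbabilityMeasure P := ⟨htot⟩
  refine ⟨Fin N → Bool, inferInstance, P, hprob,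
    fun ω => SimpleGraph.fromRel (fun a b => ω a = ω b), ?_, ?_, ?_, ?_⟩
  · -- single edge probability
    intro e
    induction e using Sym2.ind with
    | _ i j =>
      intro he
      have hij : i ≠ j := fun h => he (Sym2.mk_isDiag_iff.2 h)
      have hset : {ω : Fin N → Bool |
            s(i, j) ∈ (SimpleGraph.fromRel fun a b => ω a = ω b).edgeSet}
          = {ω : Fin N → Bool | ω i = ω j} := by
        ext ω
        simp only [Set.mem_setOf_eq, SimpleGraph.mem_edgeSet, SimpleGraph.fromRel_adj,
          ne_eq, hij, not_false_iff, true_and]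
        exact ⟨fun h => h.elim id Eq.symm, fun h => Or.inl h⟩
      rw [hset, Papp, PIDG.count_same2 h3N i j hij, hcast, PIDG.epow _ _ hle2, h21, pow_one,
        one_div]
  · -- pairwise independence
    intro e e'
    refine Sym2.inductionOn₂ e e' (fun i j k l => ?_)
    intro he he' hne
    have hij : i ≠ j := fun h => he (Sym2.mk_isDiag_iff.2 h)
    have hkl : k ≠ l := fun h => he' (Sym2.mk_isDiag_iff.2 h)
    have hset : {ω : Fin N → Bool |
          s(i, j) ∈ (SimpleGraph.fromRel fun a b => ω a = ω b).edgeSet ∧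
          s(k, l) ∈ (SimpleGraph.fromRel fun a b => ω a = ω b).edgeSet}
        = {ω : Fin N → Bool | ω i = ω j ∧ ω k = ω l} := by
      ext ω
      simp only [Set.mem_setOf_eq, SimpleGraph.mem_edgeSet, SimpleGraph.fromRel_adj,
        ne_eq, hij, hkl, not_false_iff, true_and]
      exact ⟨fun h => ⟨h.1.elim id Eq.symm, h.2.elim id Eq.symm⟩,
        fun h => ⟨Or.inl h.1, Or.inl h.2⟩⟩
    rw [hset, Papp]
    have final : ∀ c : ℕ, c = 2 ^ (N - 3) →
        (c : ℝ≥0∞) * (2 ^ (N - 1))⁻¹ = 1 / 4 := by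
      intro c hc
      rw [hc, hcast, PIDG.epow _ _ hle3, h31]
      norm_num
    by_cases hik : i = k
    · have hjl : j ≠ l := fun h => hne (by rw [hik, h])
      apply final
      have he2 : (Finset.univ.filter fun f : Fin N → Bool =>
            (f i = f j ∧ f k = f l) ∧ Odd (PIDG.cnt f))
          = Finset.univ.filter fun f : Fin N → Bool =>
            f i = f j ∧ f i = f l ∧ Odd (PIDG.cnt f) := by
        apply Finset.filter_congr
        intro f _
        exact ⟨fun h => ⟨h.1.1, (congrArg f hik).trans h.1.2, h.2⟩,
          fun h => ⟨⟨h.1, (congrArg f hik).symm.trans h.2.1⟩, h.2.2⟩⟩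
      rw [he2, PIDG.count_same3 h4N i j l hij (hik ▸ hkl) hjl]
    · by_cases hil : i = l
      · have hik' : i ≠ k := fun h => hkl (h.symm.trans hil)
        have hjk : j ≠ k := fun h => hne (by rw [h, ← hil]; exact Sym2.eq_swap)
        apply final
        have he2 : (Finset.univ.filter fun f : Fin N → Bool =>
              (f i = f j ∧ f k = f l) ∧ Odd (PIDG.cnt f))
            = Finset.univ.filter fun f : Fin N → Bool =>
              f i = f j ∧ f i = f k ∧ Odd (PIDG.cnt f) := by
          apply Finset.filter_congr
          intro f _
          exact ⟨fun h => ⟨h.1.1, (congrArg f hil).trans h.1.2.symm, h.2⟩,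
            fun h => ⟨⟨h.1, h.2.1.symm.trans (congrArg f hil)⟩, h.2.2⟩⟩
        rw [he2, PIDG.count_same3 h4N i j k hij hik' hjk]
      · by_cases hjk : j = k
        · have hjl : j ≠ l := fun h => hkl (hjk.symm.trans h)
          have hil' : i ≠ l := fun h => hne (by rw [h, ← hjk]; exact Sym2.eq_swap)
          apply final
          have he2 : (Finset.univ.filter fun f : Fin N → Bool =>
                (f i = f j ∧ f k = f l) ∧ Odd (PIDG.cnt f))
              = Finset.univ.filter fun f : Fin N → Bool =>
                f j = f i ∧ f j = f l ∧ Odd (PIDG.cnt f) := by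
            apply Finset.filter_congr
            intro f _
            exact ⟨fun h => ⟨h.1.1.symm, (congrArg f hjk).trans h.1.2, h.2⟩,
              fun h => ⟨⟨h.1.symm, (congrArg f hjk).symm.trans h.2.1⟩, h.2.2⟩⟩
          rw [he2, PIDG.count_same3 h4N j i l hij.symm hjl hil']
        · by_cases hjl : j = l
          · have hjk' : j ≠ k := fun h => hkl (h.symm.trans hjl)
            apply final
            have he2 : (Finset.univ.filter fun f : Fin N → Bool =>
                  (f i = f j ∧ f k = f l) ∧ Odd (PIDG.cnt f))
                = Finset.univ.filter fun f : Fin N → Bool =>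
                  f j = f i ∧ f j = f k ∧ Odd (PIDG.cnt f) := by
              apply Finset.filter_congr
              intro f _
              exact ⟨fun h => ⟨h.1.1.symm, (congrArg f hjl).trans h.1.2.symm, h.2⟩,
                fun h => ⟨⟨h.1.symm, h.2.1.symm.trans (congrArg f hjl)⟩, h.2.2⟩⟩
            rw [he2, PIDG.count_same3 h4N j i k hij.symm hjk' hik]
          · apply final
            have he2 : (Finset.univ.filter fun f : Fin N → Bool =>
                  (f i = f j ∧ f k = f l) ∧ Odd (PIDG.cnt f))
                = Finset.univ.filter fun f : Fin N → Bool =>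
                  f i = f j ∧ f k = f l ∧ Odd (PIDG.cnt f) := by
              apply Finset.filter_congr
              intro f _
              exact and_assoc
            rw [he2, PIDG.count_same22 hN i j k l hij hkl hik hil hjk hjl]
  · -- disconnected with probability 1 - 2^{1-N}
    have hconnset : {ω : Fin N → Bool |
          (SimpleGraph.fromRel fun a b => ω a = ω b).Connected}
        = {ω : Fin N → Bool | ∀ x y, ω x = ω y} := by
      ext ω
      simp only [Set.mem_setOf_eq]
      exact PIDG.conn_iff h0N ω
    rw [← Set.compl_setOf, prob_compl_eq_one_sub MeasurableSet.of_discrete, hconnset, Papp]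
    rw [PIDG.count_conn hN hodd, Finset.card_singleton, Nat.cast_one, one_mul]
    congr 1
    rw [one_div, ← ENNReal.inv_pow]
  · -- no perfect matching, almost surely
    have huniv : {ω : Fin N → Bool |
          ¬∃ M : (SimpleGraph.fromRel fun a b => ω a = ω b).Subgraph, M.IsPerfectMatching}
        = Set.univ := by
      ext ω
      simp only [Set.mem_setOf_eq, Set.mem_univ, iff_true]
      rintro ⟨M, hM⟩
      have hev := hM.even_card
      rw [Fintype.card_fin] at hev
      exact (Nat.not_even_iff_odd.mpr hodd) hev
    rw [huniv]
    exact measure_univ
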